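/- arXiv:math/0504235 — 3 statements merged into one kernel-verified Lean document; each statement's English description precedes it below -/
import Mathlib

section
/- The GNS representation is a well-defined *-representation: for a unital *-algebra A over C and a positive linear functional ω, the quotient H_ω = A / J_ω with inner product ⟨ψ_a, ψ_b⟩ = ω(a*b) is a pre-Hilbert space, and π(a)ψ_b := ψ_{ab} defines a *-homomorphism from A into the adjointable operators on H_ω. -/
/-- An element of C = R(i) is nonnegative if it equals the image of a
nonnegative element of the ordered ring R. -/
def CNonneg (R C : Type) [CommRing R] [LinearOrder R] [IsStrictOrderedRing R] [CommRing C] [Algebra R C]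
    (c : C) : Prop :=
  ∃ x : R, 0 ≤ x ∧ c = algebraMap R C x

/-- The GNS representation is a well-defined *-representation: for a unital
*-algebra A over C = R(i) and a positive linear functional ω with kernel
J_ω = {a : ω(a*a) = 0}, the quotient H_ω = A ⧸ J_ω carries a positive definite
Hermitian inner product with ⟨ψ_a, ψ_b⟩ = ω(a*b), and π(a)ψ_b := ψ_{ab}
defines a unital *-homomorphism of A into the adjointable operators on H_ω. -/
theorem gns_representation
    (R C A : Type) [CommRing R] [LinearOrder R] [IsStrictOrderedRing R] [CommRing C] [StarRing C]
    [Algebra R C] [Ring A] [Algebra C A] [StarRing A] [StarModule C A]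
    -- C = R(i)
    (i : C) (hi2 : i * i = -1) (hsi : star i = -i)
    (hsalg : ∀ x : R, star (algebraMap R C x) = algebraMap R C x)
    (hinj : Function.Injective (algebraMap R C))
    (hdec : ∀ c : C, ∃ x y : R, c = algebraMap R C x + i * algebraMap R C y)
    (h2 : IsUnit (2 : C))
    (ω : A →ₗ[C] C) (hω : ∀ a : A, CNonneg R C (ω (star a * a)))
    (J : Submodule C A) (hJ : ∀ a : A, a ∈ J ↔ ω (star a * a) = 0) :
    ∃ (inn : (A ⧸ J) → (A ⧸ J) → C) (π : A → (A ⧸ J) →ₗ[C] (A ⧸ J)),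
      (∀ a b : A, inn (Submodule.Quotient.mk a) (Submodule.Quotient.mk b)
        = ω (star a * b)) ∧
      -- pre-Hilbert space structure
      (∀ φ ψ χ : A ⧸ J, inn φ (ψ + χ) = inn φ ψ + inn φ χ) ∧
      (∀ (c : C) (φ ψ : A ⧸ J), inn φ (c • ψ) = c * inn φ ψ) ∧
      (∀ φ ψ : A ⧸ J, inn φ ψ = star (inn ψ φ)) ∧
      (∀ φ : A ⧸ J, CNonneg R C (inn φ φ)) ∧
      (∀ φ : A ⧸ J, inn φ φ = 0 → φ = 0) ∧
      -- π is a unital algebra homomorphism given by left multiplication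
      (∀ a b : A, π (a * b) = (π a).comp (π b)) ∧
      (∀ a b : A, π (a + b) = π a + π b) ∧
      (∀ (c : C) (a : A), π (c • a) = c • π a) ∧
      (π 1 = LinearMap.id) ∧
      (∀ a b : A, π a (Submodule.Quotient.mk b) = Submodule.Quotient.mk (a * b)) ∧
      -- π is a *-representation (adjointable action)
      (∀ (a : A) (φ ψ : A ⧸ J), inn (π a φ) ψ = inn φ (π (star a) ψ)) := by
  -- ω of a "square" is self-adjoint
  have hstar0 : ∀ a : A, star (ω (star a * a)) = ω (star a * a) := by
    intro a
    obtain ⟨x, -, hx⟩ := hω a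
    rw [hx, hsalg]
  -- hermiticity of ω on products
  have herm : ∀ a b : A, star (ω (star a * b)) = ω (star b * a) := by
    intro a b
    have e1 : ω (star (a + b) * (a + b))
        = ω (star a * a) + ω (star a * b) + ω (star b * a) + ω (star b * b) := by
      have : star (a + b) * (a + b)
          = star a * a + star a * b + star b * a + star b * b := by
        rw [star_add]; noncomm_ring
      rw [this, map_add, map_add, map_add]
    have h1 : star (ω (star a * b)) + star (ω (star b * a))
        = ω (star a * b) + ω (star b * a) := by
      have := hstar0 (a + b)
      rw [e1] at this
      rw [star_add, star_add, star_add, hstar0 a, hstar0 b] at this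
      linear_combination this
    have e2 : ω (star (a + i • b) * (a + i • b))
        = ω (star a * a) + i * ω (star a * b) + (-i) * ω (star b * a)
          + ω (star b * b) := by
      have : star (a + i • b) * (a + i • b)
          = star a * a + i • (star a * b) + (-i) • (star b * a)
            + ((-i) * i) • (star b * b) := by
        rw [star_add, star_smul, hsi]
        simp only [add_mul, mul_add, smul_mul_assoc, mul_smul_comm, smul_smul]
        module
      rw [this]
      have hii : (-i) * i = 1 := by linear_combination -hi2
      rw [hii, one_smul]
      simp only [map_add, map_smul, smul_eq_mul]
    have h2' : -i * star (ω (star a * b)) + i * star (ω (star b * a))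
        = i * ω (star a * b) + (-i) * ω (star b * a) := by
      have := hstar0 (a + i • b)
      rw [e2] at this
      rw [star_add, star_add, star_add, hstar0 a, hstar0 b, star_mul',
        star_mul', hsi, star_neg, hsi, neg_neg] at this
      linear_combination this
    have h22 : 2 * star (ω (star a * b)) = 2 * ω (star b * a) := by
      linear_combination h1 + i * h2' +
        (star (ω (star a * b)) - ω (star b * a) + ω (star a * b)
          - ω (star b * a) + ω (star b * a) - star (ω (star b * a))) * hi2
    exact h2.mul_left_cancel h22
  have herm' : ∀ a b : A, ω (star a * b) = star (ω (star b * a)) := by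
    intro a b
    rw [herm b a]
  -- key Cauchy–Schwarz-type lemma
  have hkey : ∀ a : A, ω (star a * a) = 0 → ∀ b : A, ω (star b * a) = 0 := by
    intro a ha b
    set w : C := ω (star b * a) with hw
    obtain ⟨p, q, hpq⟩ := hdec w
    obtain ⟨m, hm, hmeq⟩ := hω b
    have hws : star w = algebraMap R C p - i * algebraMap R C q := by
      rw [hpq, star_add, star_mul', hsi, hsalg, hsalg]
      ring
    have hn : w * star w = algebraMap R C p * algebraMap R C p
        + algebraMap R C q * algebraMap R C q := by
      rw [hws, hpq]
      linear_combination (-(algebraMap R C q * algebraMap R C q)) * hi2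
    have hab : ω (star a * b) = star w := herm' a b
    have hineq : ∀ k : R, 0 ≤ (p * p + q * q) * (p * p + q * q) * (m - 2 * k) := by
      intro k
      set K : C := algebraMap R C k with hK
      set v : A := (w * star w) • b + (-(K * star w)) • a with hv
      have hsww : star (w * star w) = w * star w := by
        rw [star_mul', star_star]; ring
      have hexp : star v * v
          = ((w * star w) * (w * star w)) • (star b * b)
            + ((w * star w) * (-(K * star w))) • (star b * a)
            + ((-(K * w)) * (w * star w)) • (star a * b)
            + ((-(K * w)) * (-(K * star w))) • (star a * a) := by
        rw [hv, star_add, star_smul, star_smul, hsww]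
        have : star (-(K * star w)) = -(K * w) := by
          rw [star_neg, star_mul', star_star, hK, hsalg]
        rw [this]
        simp only [add_mul, mul_add, smul_mul_assoc, mul_smul_comm, smul_smul]
        module
      have hval : ω (star v * v)
          = algebraMap R C ((p * p + q * q) * (p * p + q * q) * (m - 2 * k)) := by
        rw [hexp]
        simp only [map_add, map_smul, smul_eq_mul]
        rw [← hw, hab, ha, hmeq]
        simp only [map_sub, map_mul, map_add, map_ofNat]
        linear_combination ((w * star w + algebraMap R C p * algebraMap R C p
          + algebraMap R C q * algebraMap R C q)
          * (algebraMap R C m - 2 * K)) * hn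
      obtain ⟨x, hx, hxe⟩ := hω v
      rw [hval] at hxe
      have := hinj hxe
      rw [this]; exact hx
    have hn0 : p * p + q * q = 0 := by
      have h0 := hineq 0
      have h1 := hineq m
      have h2 := hineq 1
      nlinarith [mul_self_nonneg (p * p + q * q), mul_self_nonneg p,
        mul_self_nonneg q]
    have hp : p = 0 := by nlinarith [mul_self_nonneg p, mul_self_nonneg q]
    have hq : q = 0 := by nlinarith [mul_self_nonneg p, mul_self_nonneg q]
    rw [hpq, hp, hq, map_zero]; ring
  have hkey' : ∀ a : A, ω (star a * a) = 0 → ∀ b : A, ω (star a * b) = 0 := by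
    intro a ha b
    rw [herm' a b, hkey a ha b, star_zero]
  -- well-definedness of the sesquilinear form on the quotient
  have hwd : ∀ a a' b b' : A, a - a' ∈ J → b - b' ∈ J →
      ω (star a * b) = ω (star a' * b') := by
    intro a a' b b' haa hbb
    have h1 : ω (star a * b) - ω (star a' * b) = 0 := by
      rw [← map_sub, ← sub_mul, ← star_sub]
      exact hkey' _ ((hJ _).mp haa) b
    have h2' : ω (star a' * b) - ω (star a' * b') = 0 := by
      rw [← map_sub, ← mul_sub]
      exact hkey _ ((hJ _).mp hbb) (a')
    linear_combination h1 + h2'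
  -- J is a left ideal
  have hideal : ∀ a : A, a ∈ J → ∀ b : A, b * a ∈ J := by
    intro a ha b
    rw [hJ]
    have : star (b * a) * (b * a) = star (star b * b * a) * a := by
      simp only [star_mul, star_star]
      noncomm_ring
    rw [this]
    exact hkey a ((hJ a).mp ha) _
  -- definitions
  set inn : (A ⧸ J) → (A ⧸ J) → C :=
    fun φ ψ => ω (star (Quotient.out φ) * Quotient.out ψ) with hinn
  have hmkout : ∀ φ : A ⧸ J, Submodule.Quotient.mk (Quotient.out φ) = φ :=
    fun φ => Quotient.out_eq φ
  have hinn_mk : ∀ a b : A,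
      inn (Submodule.Quotient.mk a) (Submodule.Quotient.mk b) = ω (star a * b) := by
    intro a b
    apply hwd
    · rw [← Submodule.Quotient.eq J, hmkout]
    · rw [← Submodule.Quotient.eq J, hmkout]
  have hπle : ∀ a : A, J ≤ J.comap (LinearMap.mulLeft C a) := by
    intro a x hx
    exact hideal x hx a
  set π : A → (A ⧸ J) →ₗ[C] (A ⧸ J) :=
    fun a => Submodule.mapQ J J (LinearMap.mulLeft C a) (hπle a) with hπ
  have hπmk : ∀ a b : A,
      π a (Submodule.Quotient.mk b) = Submodule.Quotient.mk (a * b) := by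
    intro a b
    rw [hπ]
    rw [Submodule.mapQ_apply, LinearMap.mulLeft_apply]
  refine ⟨inn, π, hinn_mk, ?_, ?_, ?_, ?_, ?_, ?_, ?_, ?_, ?_, hπmk, ?_⟩
  · intro φ ψ χ
    obtain ⟨x, rfl⟩ := Submodule.Quotient.mk_surjective J φ
    obtain ⟨y, rfl⟩ := Submodule.Quotient.mk_surjective J ψ
    obtain ⟨z, rfl⟩ := Submodule.Quotient.mk_surjective J χ
    rw [← Submodule.Quotient.mk_add, hinn_mk, hinn_mk, hinn_mk, mul_add, map_add]
  · intro c φ ψ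
    obtain ⟨x, rfl⟩ := Submodule.Quotient.mk_surjective J φ
    obtain ⟨y, rfl⟩ := Submodule.Quotient.mk_surjective J ψ
    rw [← Submodule.Quotient.mk_smul, hinn_mk, hinn_mk, mul_smul_comm, map_smul,
      smul_eq_mul]
  · intro φ ψ
    obtain ⟨x, rfl⟩ := Submodule.Quotient.mk_surjective J φ
    obtain ⟨y, rfl⟩ := Submodule.Quotient.mk_surjective J ψ
    rw [hinn_mk, hinn_mk, herm y x]
  · intro φ
    obtain ⟨x, rfl⟩ := Submodule.Quotient.mk_surjective J φ
    rw [hinn_mk]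
    exact hω x
  · intro φ
    obtain ⟨x, rfl⟩ := Submodule.Quotient.mk_surjective J φ
    rw [hinn_mk]
    intro h
    rw [Submodule.Quotient.mk_eq_zero]
    exact (hJ x).mpr h
  · intro a b
    apply LinearMap.ext
    intro φ
    obtain ⟨x, rfl⟩ := Submodule.Quotient.mk_surjective J φ
    rw [LinearMap.comp_apply, hπmk, hπmk, hπmk, mul_assoc]
  · intro a b
    apply LinearMap.ext
    intro φ
    obtain ⟨x, rfl⟩ := Submodule.Quotient.mk_surjective J φ
    rw [LinearMap.add_apply, hπmk, hπmk, hπmk, add_mul, Submodule.Quotient.mk_add]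
  · intro c a
    apply LinearMap.ext
    intro φ
    obtain ⟨x, rfl⟩ := Submodule.Quotient.mk_surjective J φ
    rw [LinearMap.smul_apply, hπmk, hπmk, smul_mul_assoc, Submodule.Quotient.mk_smul]
  · apply LinearMap.ext
    intro φ
    obtain ⟨x, rfl⟩ := Submodule.Quotient.mk_surjective J φ
    rw [hπmk, one_mul, LinearMap.id_apply]
  · intro a φ ψ
    obtain ⟨x, rfl⟩ := Submodule.Quotient.mk_surjective J φ
    obtain ⟨y, rfl⟩ := Submodule.Quotient.mk_surjective J ψ
    rw [hπmk, hπmk, hinn_mk, hinn_mk, star_mul, mul_assoc]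
end

section
/- Positivity of the Rieffel-induced inner product from complete positivity: let A, B be unital *-algebras over C, E a (B,A)-bimodule with A-valued inner product ⟨·,·⟩_A such that for all n and all x₁,...,xₙ ∈ E the matrix (⟨x_i, x_j⟩_A) is a positive element of Mₙ(A). Then for any *-representation (H, π) of A on a pre-Hilbert space over C, the sesquilinear form on E ⊗_C H determined by (x⊗φ, y⊗ψ) ↦ ⟨φ, π(⟨x,y⟩_A)ψ⟩ satisfies (Φ, Φ) ≥ 0 for every Φ ∈ E ⊗_C H. -/
/-- A *-representation of a *-algebra A over C on a pre-Hilbert space over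
C = R(i): a C-module H with a positive definite Hermitian inner product and a
C-algebra homomorphism of A into the adjointable operators on H. -/
structure StarRep (R C A : Type) [CommRing R] [LinearOrder R] [IsStrictOrderedRing R] [CommRing C]
    [StarRing C] [Algebra R C] [Ring A] [Algebra C A] [StarRing A] where
  H : Type
  [addCommGroup : AddCommGroup H]
  [module : Module C H]
  inner : H → H → C
  add_right : ∀ φ ψ χ : H, inner φ (ψ + χ) = inner φ ψ + inner φ χ
  smul_right : ∀ (c : C) (φ ψ : H), inner φ (c • ψ) = c * inner φ ψ
  herm : ∀ φ ψ : H, inner φ ψ = star (inner ψ φ)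
  pos : ∀ φ : H, CNonneg R C (inner φ φ)
  definite : ∀ φ : H, inner φ φ = 0 → φ = 0
  π : A →ₐ[C] Module.End C H
  star_prop : ∀ (a : A) (φ ψ : H), inner (π a φ) ψ = inner φ (π (star a) ψ)

attribute [instance] StarRep.addCommGroup StarRep.module

open scoped TensorProduct

/-- Type synonym carrying the conjugate C-module structure. -/
def ConjMod (C M : Type) : Type := M

instance (C M : Type) [I : AddCommGroup M] : AddCommGroup (ConjMod C M) := I

instance (C M : Type) [CommRing C] [StarRing C] [AddCommGroup M] [Module C M] :
    Module C (ConjMod C M) := Module.compHom M (starRingEnd C)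

/-- Unwrap the type synonym. -/
def ConjMod.out {C M : Type} (x : ConjMod C M) : M := x

lemma ConjMod.smul_def {C M : Type} [CommRing C] [StarRing C] [AddCommGroup M]
    [Module C M] (c : C) (x : M) :
    c • (show ConjMod C M from x) = star c • x := rfl

/-- Positivity of the Rieffel-induced inner product from complete positivity:
let A, B be unital *-algebras over C = R(i) (with 1/n ∈ R for all n ≥ 1) and E
a (B,A)-inner-product bimodule whose A-valued inner product is completely
positive (all matrices (⟨x_i, x_j⟩_A) are positive elements of Mₙ(A)). Then
for any *-representation (H, π) of A, the sesquilinear form on E ⊗_C H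
determined by (x⊗φ, y⊗ψ) ↦ ⟨φ, π(⟨x,y⟩_A)ψ⟩ satisfies (Φ, Φ) ≥ 0 for every
Φ ∈ E ⊗_C H. -/
theorem rieffel_induced_inner_product_positive
    (R C A B E : Type) [CommRing R] [LinearOrder R] [IsStrictOrderedRing R] [CommRing C] [StarRing C]
    [Algebra R C] [Ring A] [Algebra C A] [StarRing A]
    [Ring B] [Algebra C B] [StarRing B]
    [AddCommGroup E] [Module C E] [Module B E]
    (hinv : ∀ k : ℕ, 0 < k → IsUnit (k : R))
    -- right A-action on E
    (ra : E → A → E)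
    (ra_mul : ∀ (x : E) (a b : A), ra (ra x a) b = ra x (a * b))
    (ra_addl : ∀ (x y : E) (a : A), ra (x + y) a = ra x a + ra y a)
    (ra_addr : ∀ (x : E) (a b : A), ra x (a + b) = ra x a + ra x b)
    (ra_smul : ∀ (c : C) (x : E) (a : A), ra (c • x) a = c • ra x a)
    (ra_one : ∀ x : E, ra x 1 = x)
    -- the left B-action commutes with the right A-action
    (hBA : ∀ (b : B) (x : E) (a : A), ra (b • x) a = b • ra x a)
    -- A-valued inner product on E
    (ipA : E → E → A)
    (ipA_herm : ∀ x y : E, ipA x y = star (ipA y x))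
    (ipA_addr : ∀ x y z : E, ipA x (y + z) = ipA x y + ipA x z)
    (ipA_smulr : ∀ (c : C) (x y : E), ipA x (c • y) = c • ipA x y)
    (ipA_ra : ∀ (x y : E) (a : A), ipA x (ra y a) = ipA x y * a)
    -- B acts by adjointable operators
    (ipA_B : ∀ (b : B) (x y : E), ipA (b • x) y = ipA x (star b • y))
    -- complete positivity of the A-valued inner product
    (hcp : ∀ (n : ℕ) (x : Fin n → E) (Ω : Matrix (Fin n) (Fin n) A →ₗ[C] C),
      (∀ N : Matrix (Fin n) (Fin n) A, CNonneg R C (Ω (star N * N))) →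
      CNonneg R C (Ω (Matrix.of fun i j => ipA (x i) (x j))))
    -- a *-representation of A
    (ρ : StarRep R C A) :
    ∃ T : (E ⊗[C] ρ.H) → (E ⊗[C] ρ.H) → C,
      (∀ (x y : E) (φ ψ : ρ.H),
        T (x ⊗ₜ[C] φ) (y ⊗ₜ[C] ψ) = ρ.inner φ (ρ.π (ipA x y) ψ)) ∧
      (∀ Φ Ψ Ξ : E ⊗[C] ρ.H, T Φ (Ψ + Ξ) = T Φ Ψ + T Φ Ξ) ∧
      (∀ Φ Ψ Ξ : E ⊗[C] ρ.H, T (Φ + Ψ) Ξ = T Φ Ξ + T Ψ Ξ) ∧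
      (∀ (c : C) (Φ Ψ : E ⊗[C] ρ.H), T Φ (c • Ψ) = c * T Φ Ψ) ∧
      (∀ (c : C) (Φ Ψ : E ⊗[C] ρ.H), T (c • Φ) Ψ = star c * T Φ Ψ) ∧
      (∀ Φ : E ⊗[C] ρ.H, CNonneg R C (T Φ Φ)) := by
  classical
  -- basic facts about the inner product on H
  have add_left : ∀ φ ψ χ : ρ.H, ρ.inner (φ + ψ) χ = ρ.inner φ χ + ρ.inner ψ χ := by
    intro φ ψ χ
    rw [ρ.herm, ρ.add_right, star_add, ← ρ.herm, ← ρ.herm]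
  have smul_left : ∀ (c : C) (φ ψ : ρ.H), ρ.inner (c • φ) ψ = star c * ρ.inner φ ψ := by
    intro c φ ψ
    rw [ρ.herm, ρ.smul_right, star_mul', ← ρ.herm]
  have hflip : ∀ (x y : E) (φ ψ : ρ.H),
      ρ.inner φ (ρ.π (ipA x y) ψ) = ρ.inner (ρ.π (ipA y x) φ) ψ := by
    intro x y φ ψ
    rw [ipA_herm x y]
    exact (ρ.star_prop _ _ _).symm
  -- the linear functional on E ⊗ H determined by (x, φ) in the first slot
  let g : E → ρ.H → (E ⊗[C] ρ.H →ₗ[C] C) := fun x φ => TensorProduct.lift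
    { toFun := fun y =>
        { toFun := fun ψ => ρ.inner φ (ρ.π (ipA x y) ψ)
          map_add' := fun ψ χ => by
            show ρ.inner φ (ρ.π (ipA x y) (ψ + χ)) = _
            rw [map_add, ρ.add_right]
          map_smul' := fun c ψ => by
            show ρ.inner φ (ρ.π (ipA x y) (c • ψ)) = _
            rw [map_smul, ρ.smul_right, RingHom.id_apply, smul_eq_mul] }
      map_add' := fun y z => by
        ext ψ
        show ρ.inner φ (ρ.π (ipA x (y + z)) ψ) =
          ρ.inner φ (ρ.π (ipA x y) ψ) + ρ.inner φ (ρ.π (ipA x z) ψ)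
        rw [ipA_addr, map_add, LinearMap.add_apply, ρ.add_right]
      map_smul' := fun c y => by
        ext ψ
        show ρ.inner φ (ρ.π (ipA x (c • y)) ψ) = c * ρ.inner φ (ρ.π (ipA x y) ψ)
        rw [ipA_smulr, map_smul, LinearMap.smul_apply, ρ.smul_right] }
  have hg : ∀ (x y : E) (φ ψ : ρ.H),
      g x φ (y ⊗ₜ[C] ψ) = ρ.inner φ (ρ.π (ipA x y) ψ) := by
    intro x y φ ψ
    simp only [g, TensorProduct.lift.tmul, LinearMap.coe_mk, AddHom.coe_mk]
  -- the conjugate-bilinear map into the conjugate dual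
  let b : E →ₗ[C] ρ.H →ₗ[C] ConjMod C (E ⊗[C] ρ.H →ₗ[C] C) :=
    { toFun := fun x =>
        { toFun := fun φ => (g x φ : ConjMod C (E ⊗[C] ρ.H →ₗ[C] C))
          map_add' := fun φ φ' => by
            show g x (φ + φ') = g x φ + g x φ'
            apply TensorProduct.ext'
            intro y ψ
            rw [LinearMap.add_apply, hg, hg, hg, add_left]
          map_smul' := fun c φ => by
            show g x (c • φ) = star c • g x φ
            apply TensorProduct.ext'
            intro y ψ
            rw [LinearMap.smul_apply, hg, hg, smul_eq_mul, smul_left] }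
      map_add' := fun x x' => by
        ext φ
        show g (x + x') φ = g x φ + g x' φ
        apply TensorProduct.ext'
        intro y ψ
        rw [LinearMap.add_apply, hg, hg, hg, hflip, hflip, hflip, ipA_addr,
          map_add, LinearMap.add_apply, add_left]
      map_smul' := fun c x => by
        ext φ
        show g (c • x) φ = star c • g x φ
        apply TensorProduct.ext'
        intro y ψ
        rw [LinearMap.smul_apply, hg, hg, smul_eq_mul, hflip, hflip, ipA_smulr,
          map_smul, LinearMap.smul_apply, smul_left] }
  let K : E ⊗[C] ρ.H →ₗ[C] ConjMod C (E ⊗[C] ρ.H →ₗ[C] C) := TensorProduct.lift b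
  let T : (E ⊗[C] ρ.H) → (E ⊗[C] ρ.H) → C :=
    fun Φ Ψ => ConjMod.out (K Φ) Ψ
  have hT : ∀ (x y : E) (φ ψ : ρ.H),
      T (x ⊗ₜ[C] φ) (y ⊗ₜ[C] ψ) = ρ.inner φ (ρ.π (ipA x y) ψ) := by
    intro x y φ ψ
    show ConjMod.out (TensorProduct.lift b (x ⊗ₜ[C] φ)) (y ⊗ₜ[C] ψ) = _
    rw [TensorProduct.lift.tmul]
    exact hg x y φ ψ
  have hTaddr : ∀ Φ Ψ Ξ : E ⊗[C] ρ.H, T Φ (Ψ + Ξ) = T Φ Ψ + T Φ Ξ :=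
    fun Φ Ψ Ξ => map_add (ConjMod.out (K Φ)) Ψ Ξ
  have hTaddl : ∀ Φ Ψ Ξ : E ⊗[C] ρ.H, T (Φ + Ψ) Ξ = T Φ Ξ + T Ψ Ξ := by
    intro Φ Ψ Ξ
    show ConjMod.out (K (Φ + Ψ)) Ξ = _
    rw [map_add]
    rfl
  have hTsmulr : ∀ (c : C) (Φ Ψ : E ⊗[C] ρ.H), T Φ (c • Ψ) = c * T Φ Ψ := by
    intro c Φ Ψ
    show ConjMod.out (K Φ) (c • Ψ) = c * T Φ Ψ
    rw [map_smul, smul_eq_mul]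
  have hTsmull : ∀ (c : C) (Φ Ψ : E ⊗[C] ρ.H), T (c • Φ) Ψ = star c * T Φ Ψ := by
    intro c Φ Ψ
    show ConjMod.out (K (c • Φ)) Ψ = star c * T Φ Ψ
    rw [map_smul]
    show (star c • ConjMod.out (K Φ)) Ψ = _
    rw [LinearMap.smul_apply, smul_eq_mul]
  -- CNonneg facts
  have czero : CNonneg R C 0 := ⟨0, le_rfl, by rw [map_zero]⟩
  have cadd : ∀ {a b : C}, CNonneg R C a → CNonneg R C b → CNonneg R C (a + b) := by
    rintro a b ⟨u, hu, rfl⟩ ⟨v, hv, rfl⟩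
    exact ⟨u + v, add_nonneg hu hv, by rw [map_add]⟩
  have csum : ∀ {ι : Type} (s : Finset ι) (f : ι → C),
      (∀ k ∈ s, CNonneg R C (f k)) → CNonneg R C (∑ k ∈ s, f k) := by
    intro ι s f hf
    induction s using Finset.induction_on with
    | empty => simpa using czero
    | @insert a s ha ih =>
        rw [Finset.sum_insert ha]
        exact cadd (hf _ (Finset.mem_insert_self _ _))
          (ih fun k hk => hf k (Finset.mem_insert_of_mem hk))
  -- inner product of sums
  have inner_zero_right : ∀ φ : ρ.H, ρ.inner φ 0 = 0 := by
    intro φ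
    have h := ρ.smul_right 0 φ 0
    rw [zero_smul, zero_mul] at h
    exact h
  have inner_zero_left : ∀ φ : ρ.H, ρ.inner 0 φ = 0 := by
    intro φ
    rw [ρ.herm, inner_zero_right, star_zero]
  have inner_sum_right : ∀ {ι : Type} (s : Finset ι) (f : ι → ρ.H) (φ : ρ.H),
      ρ.inner φ (∑ k ∈ s, f k) = ∑ k ∈ s, ρ.inner φ (f k) := by
    intro ι s f φ
    induction s using Finset.induction_on with
    | empty => simpa using inner_zero_right φ
    | @insert a s ha ih =>
        rw [Finset.sum_insert ha, Finset.sum_insert ha, ρ.add_right, ih]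
  have inner_sum_left : ∀ {ι : Type} (s : Finset ι) (f : ι → ρ.H) (φ : ρ.H),
      ρ.inner (∑ k ∈ s, f k) φ = ∑ k ∈ s, ρ.inner (f k) φ := by
    intro ι s f φ
    induction s using Finset.induction_on with
    | empty => simpa using inner_zero_left φ
    | @insert a s ha ih =>
        rw [Finset.sum_insert ha, Finset.sum_insert ha, add_left, ih]
  -- every element of the tensor product is a finite sum of pure tensors
  have hrep : ∀ Φ : E ⊗[C] ρ.H, ∃ (n : ℕ) (x : Fin n → E) (φ : Fin n → ρ.H),
      Φ = ∑ i, x i ⊗ₜ[C] φ i := by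
    intro Φ
    induction Φ using TensorProduct.induction_on with
    | zero => exact ⟨0, ![], ![], by simp⟩
    | tmul x φ => exact ⟨1, ![x], ![φ], by simp⟩
    | add Φ Ψ hΦ hΨ =>
        obtain ⟨n, x, φ, rfl⟩ := hΦ
        obtain ⟨m, y, ψ, rfl⟩ := hΨ
        refine ⟨n + m, Fin.append x y, Fin.append φ ψ, ?_⟩
        rw [Fin.sum_univ_add]
        simp [Fin.append_left, Fin.append_right]
  -- T of finite sums
  have hTzero_left : ∀ Ψ, T 0 Ψ = 0 := by
    intro Ψ
    show ConjMod.out (K 0) Ψ = 0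
    rw [map_zero]
    rfl
  have hTsum_left : ∀ {ι : Type} (s : Finset ι) (f : ι → E ⊗[C] ρ.H)
      (Ψ : E ⊗[C] ρ.H), T (∑ i ∈ s, f i) Ψ = ∑ i ∈ s, T (f i) Ψ := by
    intro ι s f Ψ
    induction s using Finset.induction_on with
    | empty => simpa using hTzero_left Ψ
    | @insert a s ha ih =>
        rw [Finset.sum_insert ha, Finset.sum_insert ha, hTaddl, ih]
  have hTsum_right : ∀ {ι : Type} (s : Finset ι) (Φ : E ⊗[C] ρ.H)
      (f : ι → E ⊗[C] ρ.H), T Φ (∑ i ∈ s, f i) = ∑ i ∈ s, T Φ (f i) :=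
    by intro ι s Φ f; exact map_sum (ConjMod.out (K Φ)) f s
  -- positivity
  have hpos : ∀ Φ : E ⊗[C] ρ.H, CNonneg R C (T Φ Φ) := by
    intro Φ
    obtain ⟨n, x, φ, rfl⟩ := hrep Φ
    let Ω : Matrix (Fin n) (Fin n) A →ₗ[C] C :=
      { toFun := fun M => ∑ i, ∑ j, ρ.inner (φ i) (ρ.π (M i j) (φ j))
        map_add' := by
          intro M N
          rw [← Finset.sum_add_distrib]
          refine Finset.sum_congr rfl fun i _ => ?_
          rw [← Finset.sum_add_distrib]
          refine Finset.sum_congr rfl fun j _ => ?_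
          rw [Matrix.add_apply, map_add, LinearMap.add_apply, ρ.add_right]
        map_smul' := by
          intro c M
          simp only [RingHom.id_apply, smul_eq_mul]
          rw [Finset.mul_sum]
          refine Finset.sum_congr rfl fun i _ => ?_
          rw [Finset.mul_sum]
          refine Finset.sum_congr rfl fun j _ => ?_
          rw [Matrix.smul_apply, map_smul, LinearMap.smul_apply, ρ.smul_right] }
    have hΩ : ∀ N : Matrix (Fin n) (Fin n) A, CNonneg R C (Ω (star N * N)) := by
      intro N
      have hkey : Ω (star N * N) =
          ∑ k, ρ.inner (∑ i, ρ.π (N k i) (φ i)) (∑ j, ρ.π (N k j) (φ j)) := by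
        show (∑ i, ∑ j, ρ.inner (φ i) (ρ.π ((star N * N) i j) (φ j))) = _
        have lhs_eq : ∀ i j : Fin n,
            ρ.inner (φ i) (ρ.π ((star N * N) i j) (φ j)) =
              ∑ k, ρ.inner (ρ.π (N k i) (φ i)) (ρ.π (N k j) (φ j)) := by
          intro i j
          have : (star N * N) i j = ∑ k, star (N k i) * N k j := by
            rw [Matrix.mul_apply]
            refine Finset.sum_congr rfl fun k _ => ?_
            rw [Matrix.star_apply]
          rw [this, map_sum, LinearMap.sum_apply, inner_sum_right]
          refine Finset.sum_congr rfl fun k _ => ?_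
          rw [map_mul, Module.End.mul_apply, ← ρ.star_prop]
        calc (∑ i, ∑ j, ρ.inner (φ i) (ρ.π ((star N * N) i j) (φ j)))
            = ∑ i, ∑ j, ∑ k, ρ.inner (ρ.π (N k i) (φ i)) (ρ.π (N k j) (φ j)) := by
              refine Finset.sum_congr rfl fun i _ => ?_
              exact Finset.sum_congr rfl fun j _ => lhs_eq i j
          _ = ∑ i, ∑ k, ∑ j, ρ.inner (ρ.π (N k i) (φ i)) (ρ.π (N k j) (φ j)) := by
              refine Finset.sum_congr rfl fun i _ => ?_
              exact Finset.sum_comm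
          _ = ∑ k, ∑ i, ∑ j, ρ.inner (ρ.π (N k i) (φ i)) (ρ.π (N k j) (φ j)) :=
              Finset.sum_comm
          _ = ∑ k, ρ.inner (∑ i, ρ.π (N k i) (φ i)) (∑ j, ρ.π (N k j) (φ j)) := by
              refine Finset.sum_congr rfl fun k _ => ?_
              rw [inner_sum_left]
              refine Finset.sum_congr rfl fun i _ => ?_
              rw [inner_sum_right]
      rw [hkey]
      exact csum _ _ fun k _ => ρ.pos _
    have hmain := hcp n x Ω hΩ
    have hTT : T (∑ i, x i ⊗ₜ[C] φ i) (∑ i, x i ⊗ₜ[C] φ i) =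
        Ω (Matrix.of fun i j => ipA (x i) (x j)) := by
      rw [hTsum_left]
      show _ = ∑ i, ∑ j, ρ.inner (φ i) (ρ.π ((Matrix.of fun i j => ipA (x i) (x j)) i j) (φ j))
      refine Finset.sum_congr rfl fun i _ => ?_
      rw [hTsum_right]
      refine Finset.sum_congr rfl fun j _ => ?_
      rw [hT, Matrix.of_apply]
    rw [hTT]
    exact hmain
  exact ⟨T, hT, hTaddr, hTaddl, hTsmulr, hTsmull, hpos⟩
end

section
/- Classical limit of positivity: let A = C∞(M)[[λ]] with a Hermitian star product, assumed to be a positive deformation (every positive linear functional of C∞(M) admits a positive extension order by order). If h ∈ C∞(M)[[λ]] is a positive element of (A, ⋆) (i.e., ω(h) ≥ 0 for all positive ℂ[[λ]]-linear functionals ω), then its classical limit h₀ = h mod λ is a positive element of C∞(M) (i.e., ω₀(h₀) ≥ 0 for all positive linear functionals ω₀ of C∞(M)). -/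
/-- A complex number is nonnegative if it is real and nonnegative. -/
def CxNonneg (z : ℂ) : Prop := 0 ≤ z.re ∧ z.im = 0

/-- An element of ℂ[[λ]] is nonnegative if it lies in ℝ[[λ]] and is zero or has
positive lowest-order nonzero coefficient. -/
def PSCxNonneg (c : PowerSeries ℂ) : Prop :=
  (∀ m : ℕ, (PowerSeries.coeff (R := ℂ) m c).im = 0) ∧
  (c = 0 ∨ ∃ n : ℕ, (∀ m < n, PowerSeries.coeff (R := ℂ) m c = 0) ∧
    0 < (PowerSeries.coeff (R := ℂ) n c).re)

/-- Classical limit of positivity: let A₀ be a *-algebra over ℂ and A a formal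
deformation of it, i.e. a *-algebra over ℂ[[λ]] together with a classical
limit map cl : A → A₀ ("reduction mod λ") which is a star ring homomorphism,
is ℂ[[λ]]-semilinear over the constant-term map, and is surjective. Assume the
deformation is positive: every positive ℂ-linear functional ω₀ of A₀ extends
to a positive ℂ[[λ]]-linear functional ω of A with constant term ω₀ ∘ cl.
If h ∈ A is a positive element of A (ω(h) ≥ 0 for all positive ℂ[[λ]]-linear
functionals ω), then its classical limit cl h is a positive element of A₀
(ω₀(cl h) ≥ 0 for all positive linear functionals ω₀ of A₀). -/
theorem classical_limit_of_positivity
    (A₀ : Type) [Ring A₀] [Algebra ℂ A₀] [StarRing A₀]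
    (A : Type) [Ring A] [Module (PowerSeries ℂ) A] [StarRing A]
    -- the classical limit map (reduction modulo λ)
    (cl : A →+* A₀)
    (cl_star : ∀ a : A, cl (star a) = star (cl a))
    (cl_smul : ∀ (c : PowerSeries ℂ) (a : A),
      cl (c • a) = PowerSeries.constantCoeff (R := ℂ) c • cl a)
    (cl_surj : Function.Surjective cl)
    -- positive deformation: order-by-order positive extension of positive
    -- classical functionals
    (hposdef : ∀ ω₀ : A₀ →ₗ[ℂ] ℂ, (∀ a : A₀, CxNonneg (ω₀ (star a * a))) →
      ∃ ω : A →ₗ[PowerSeries ℂ] PowerSeries ℂ,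
        (∀ a : A, PSCxNonneg (ω (star a * a))) ∧
        (∀ a : A, PowerSeries.constantCoeff (R := ℂ) (ω a) = ω₀ (cl a)))
    -- h is a positive element of the deformed algebra
    (h : A)
    (hh : ∀ ω : A →ₗ[PowerSeries ℂ] PowerSeries ℂ,
      (∀ a : A, PSCxNonneg (ω (star a * a))) → PSCxNonneg (ω h)) :
    ∀ ω₀ : A₀ →ₗ[ℂ] ℂ, (∀ a : A₀, CxNonneg (ω₀ (star a * a))) →
      CxNonneg (ω₀ (cl h)) := by
  intro ω₀ hω₀
  obtain ⟨ω, hωpos, hωcl⟩ := hposdef ω₀ hω₀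
  obtain ⟨him, hcase⟩ := hh ω hωpos
  have hcc : PowerSeries.constantCoeff (R := ℂ) (ω h) = ω₀ (cl h) := hωcl h
  have hcc0 : PowerSeries.coeff (R := ℂ) 0 (ω h) = ω₀ (cl h) := by
    rw [PowerSeries.coeff_zero_eq_constantCoeff, hcc]
  constructor
  · rcases hcase with h0 | ⟨n, hlt, hpos⟩
    · simp [← hcc0, h0]
    · rcases Nat.eq_zero_or_pos n with rfl | hn
      · rw [← hcc0]; exact le_of_lt hpos
      · rw [← hcc0, hlt 0 hn]; simp
  · rw [← hcc0]; exact him 0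
end
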